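/- Let H be a complex Hilbert space, ψ ∈ H a unit vector, and A₀, A₁, B, Z : H →L[ℂ] H bounded self-adjoint operators, each squaring to the identity, such that A₀ and A₁ each commute with B and with Z. Let d = re⟪ψ, (A₀A₁ + A₁A₀)ψ⟫ / 2. Then |re⟪ψ, (A₀B + A₁B + A₀Z − A₁Z)ψ⟫| ≤ √(2(1 + d)) + √(2(1 − d)). -/

import Mathlib

private lemma sa_inner_move {H : Type*} [NormedAddCommGroup H] [InnerProductSpace ℂ H]
    [CompleteSpace H] {T : H →L[ℂ] H} (hT : IsSelfAdjoint T) (x y : H) :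
    (inner ℂ x (T y) : ℂ) = inner ℂ (T x) y := by
  rw [← ContinuousLinearMap.adjoint_inner_left]
  congr 1
  rw [← ContinuousLinearMap.star_eq_adjoint, hT.star_eq]

private lemma inv_norm {H : Type*} [NormedAddCommGroup H] [InnerProductSpace ℂ H]
    [CompleteSpace H] {T : H →L[ℂ] H} (hT : IsSelfAdjoint T) (hT2 : T * T = 1)
    (ψ : H) (hψ : ‖ψ‖ = 1) : ‖T ψ‖ = 1 := by
  have h1 : (inner ℂ (T ψ) (T ψ) : ℂ) = inner ℂ ψ ψ := by
    rw [← sa_inner_move hT, ← ContinuousLinearMap.comp_apply, ← ContinuousLinearMap.mul_def,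
      hT2, ContinuousLinearMap.one_apply]
  have h2 := inner_self_eq_norm_sq_to_K (𝕜 := ℂ) (T ψ)
  have h3 := inner_self_eq_norm_sq_to_K (𝕜 := ℂ) ψ
  rw [h2, h3, hψ] at h1
  have : (‖T ψ‖ : ℂ) ^ 2 = 1 := by simpa using h1
  have : (‖T ψ‖ : ℝ) ^ 2 = 1 := by exact_mod_cast this
  nlinarith [norm_nonneg (T ψ)]

/-- For self-adjoint involutions `A₀, A₁, B, Z` with `A₀, A₁` each
commuting with `B` and `Z`, and `d = ⟨{A₀, A₁}⟩/2`, the CHSH-type parameter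
`⟨A₀B + A₁B + A₀Z - A₁Z⟩` is bounded by `√(2(1 + d)) + √(2(1 - d))`. -/
theorem tripartite_chsh_bound
    {H : Type*} [NormedAddCommGroup H] [InnerProductSpace ℂ H] [CompleteSpace H]
    (ψ : H) (hψ : ‖ψ‖ = 1)
    (A₀ A₁ B Z : H →L[ℂ] H)
    (hsa : ∀ X ∈ [A₀, A₁, B, Z], IsSelfAdjoint X)
    (hsq : ∀ X ∈ [A₀, A₁, B, Z], X * X = 1)
    (hB : ∀ i ∈ [A₀, A₁], i * B = B * i)
    (hZ : ∀ i ∈ [A₀, A₁], i * Z = Z * i)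
    (d : ℝ) (hd : d = (inner ℂ ψ ((A₀ * A₁ + A₁ * A₀) ψ) : ℂ).re / 2) :
    |(inner ℂ ψ ((A₀ * B + A₁ * B + A₀ * Z - A₁ * Z) ψ) : ℂ).re| ≤
      Real.sqrt (2 * (1 + d)) + Real.sqrt (2 * (1 - d)) := by
  have hA0 := hsa A₀ (by simp)
  have hA1 := hsa A₁ (by simp)
  have hBsa := hsa B (by simp)
  have hZsa := hsa Z (by simp)
  have hA0sq := hsq A₀ (by simp)
  have hA1sq := hsq A₁ (by simp)
  have hBnorm : ‖B ψ‖ = 1 := inv_norm hBsa (hsq B (by simp)) ψ hψ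
  have hZnorm : ‖Z ψ‖ = 1 := inv_norm hZsa (hsq Z (by simp)) ψ hψ
  set u := (A₀ + A₁) ψ with hu
  set v := (A₀ - A₁) ψ with hv
  -- split the main inner ℂ product
  have hsplit : (inner ℂ ψ ((A₀ * B + A₁ * B + A₀ * Z - A₁ * Z) ψ) : ℂ)
      = inner ℂ u (B ψ) + inner ℂ v (Z ψ) := by
    have e0 : (inner ℂ ψ ((A₀ * B) ψ) : ℂ) = inner ℂ (A₀ ψ) (B ψ) := by
      rw [ContinuousLinearMap.mul_apply, sa_inner_move hA0]
    have e1 : (inner ℂ ψ ((A₁ * B) ψ) : ℂ) = inner ℂ (A₁ ψ) (B ψ) := by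
      rw [ContinuousLinearMap.mul_apply, sa_inner_move hA1]
    have e2 : (inner ℂ ψ ((A₀ * Z) ψ) : ℂ) = inner ℂ (A₀ ψ) (Z ψ) := by
      rw [ContinuousLinearMap.mul_apply, sa_inner_move hA0]
    have e3 : (inner ℂ ψ ((A₁ * Z) ψ) : ℂ) = inner ℂ (A₁ ψ) (Z ψ) := by
      rw [ContinuousLinearMap.mul_apply, sa_inner_move hA1]
    simp only [ContinuousLinearMap.add_apply, ContinuousLinearMap.sub_apply,
      inner_add_right, inner_sub_right, e0, e1, e2, e3, hu, hv,
      ContinuousLinearMap.add_apply, inner_add_left, inner_sub_left]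
    ring
  -- norms of u, v
  have hnormu : ‖u‖ ^ 2 = 2 * (1 + d) := by
    have h1 : (inner ℂ u u : ℂ) = inner ℂ ψ (((A₀ + A₁) * (A₀ + A₁)) ψ) := by
      rw [hu, ← sa_inner_move (hA0.add hA1), ContinuousLinearMap.mul_apply]
    have hexp : (A₀ + A₁) * (A₀ + A₁) = (2 : H →L[ℂ] H) + (A₀ * A₁ + A₁ * A₀) := by
      have h : (A₀ + A₁) * (A₀ + A₁) = A₀ * A₀ + A₁ * A₁ + (A₀ * A₁ + A₁ * A₀) := by noncomm_ring
      rw [h, hA0sq, hA1sq, one_add_one_eq_two]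
    rw [hexp] at h1
    have h2 : (inner ℂ u u : ℂ).re
        = (inner ℂ ψ (((2 : H →L[ℂ] H) + (A₀ * A₁ + A₁ * A₀)) ψ) : ℂ).re := by rw [h1]
    have h3 : (inner ℂ ψ (((2 : H →L[ℂ] H) + (A₀ * A₁ + A₁ * A₀)) ψ) : ℂ)
        = 2 * inner ℂ ψ ψ + inner ℂ ψ ((A₀ * A₁ + A₁ * A₀) ψ) := by
      simp only [ContinuousLinearMap.add_apply, inner_add_right]
      congr 1
      have : ((2 : H →L[ℂ] H)) ψ = (2 : ℂ) • ψ := by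
        simp [ContinuousLinearMap.smul_apply, two_smul]
      rw [this, inner_smul_right]
    have h4 : (inner ℂ ψ ψ : ℂ) = 1 := by
      rw [inner_self_eq_norm_sq_to_K, hψ]; norm_num
    have h5 := inner_self_eq_norm_sq_to_K (𝕜 := ℂ) u
    rw [h3, h4] at h2
    have : (inner ℂ u u : ℂ).re = ‖u‖ ^ 2 := by
      exact_mod_cast inner_self_eq_norm_sq (𝕜 := ℂ) u
    rw [this] at h2
    simp only [Complex.add_re, Complex.mul_re] at h2
    rw [hd]
    norm_num at h2 ⊢
    linarith
  have hnormv : ‖v‖ ^ 2 = 2 * (1 - d) := by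
    have h1 : (inner ℂ v v : ℂ) = inner ℂ ψ (((A₀ - A₁) * (A₀ - A₁)) ψ) := by
      rw [hv, ← sa_inner_move (hA0.sub hA1), ContinuousLinearMap.mul_apply]
    have hexp : (A₀ - A₁) * (A₀ - A₁) = (2 : H →L[ℂ] H) - (A₀ * A₁ + A₁ * A₀) := by
      have h : (A₀ - A₁) * (A₀ - A₁) = A₀ * A₀ + A₁ * A₁ - (A₀ * A₁ + A₁ * A₀) := by noncomm_ring
      rw [h, hA0sq, hA1sq, one_add_one_eq_two]
    rw [hexp] at h1
    have h2 : (inner ℂ v v : ℂ).re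
        = (inner ℂ ψ (((2 : H →L[ℂ] H) - (A₀ * A₁ + A₁ * A₀)) ψ) : ℂ).re := by rw [h1]
    have h3 : (inner ℂ ψ (((2 : H →L[ℂ] H) - (A₀ * A₁ + A₁ * A₀)) ψ) : ℂ)
        = 2 * inner ℂ ψ ψ - inner ℂ ψ ((A₀ * A₁ + A₁ * A₀) ψ) := by
      simp only [ContinuousLinearMap.sub_apply, inner_sub_right]
      congr 1
      have : ((2 : H →L[ℂ] H)) ψ = (2 : ℂ) • ψ := by
        simp [ContinuousLinearMap.smul_apply, two_smul]
      rw [this, inner_smul_right]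
    have h4 : (inner ℂ ψ ψ : ℂ) = 1 := by
      rw [inner_self_eq_norm_sq_to_K, hψ]; norm_num
    have h5 := inner_self_eq_norm_sq_to_K (𝕜 := ℂ) v
    rw [h3, h4] at h2
    have : (inner ℂ v v : ℂ).re = ‖v‖ ^ 2 := by
      exact_mod_cast inner_self_eq_norm_sq (𝕜 := ℂ) v
    rw [this] at h2
    simp only [Complex.sub_re, Complex.mul_re] at h2
    rw [hd]
    norm_num at h2 ⊢
    linarith
  -- finish
  rw [hsplit]
  have hub : ‖u‖ = Real.sqrt (2 * (1 + d)) := by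
    rw [← hnormu, Real.sqrt_sq (norm_nonneg u)]
  have hvb : ‖v‖ = Real.sqrt (2 * (1 - d)) := by
    rw [← hnormv, Real.sqrt_sq (norm_nonneg v)]
  calc |((inner ℂ u (B ψ) : ℂ) + inner ℂ v (Z ψ)).re|
      ≤ ‖(inner ℂ u (B ψ) : ℂ) + inner ℂ v (Z ψ)‖ := Complex.abs_re_le_norm _
    _ ≤ ‖(inner ℂ u (B ψ) : ℂ)‖ + ‖(inner ℂ v (Z ψ) : ℂ)‖ := norm_add_le _ _
    _ ≤ ‖u‖ * ‖B ψ‖ + ‖v‖ * ‖Z ψ‖ := by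
        gcongr <;> exact norm_inner_le_norm _ _
    _ = Real.sqrt (2 * (1 + d)) + Real.sqrt (2 * (1 - d)) := by
        rw [hBnorm, hZnorm, hub, hvb]; ring
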